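/- Fix γ_A = 1/16 and γ_B = (13√13 − 35)/108. Define constants c₁ = 8/(3−γ_B)², c₂ = (1+γ_B)²/((1−γ_A)(1−γ_B)(3−γ_B)²), c₃ = γ_A(1+γ_B)²/((1−γ_A)(1−γ_B)(3−γ_B)²), c₄ = γ_B/((1−γ_A)(1−γ_B)), and t₁ = (2−γ_B)/3, t₂ = (4−3γ_A−2γ_B+γ_Aγ_B)/6, t₃ = (1−γ_B)/6, t₄ = (1−γ_A)/3. Then the function η(k) := c₁t₁^k + c₂t₂^k − c₃t₃^k − c₄t₄^k (for k ≥ 1, with η(0) := 1) is strictly decreasing in k over the nonnegative integers. -/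
import Mathlib


noncomputable def γA : ℝ := 1 / 16
noncomputable def γB : ℝ := (13 * Real.sqrt 13 - 35) / 108

noncomputable def c₁ : ℝ := 8 / (3 - γB) ^ 2
noncomputable def c₂ : ℝ := (1 + γB) ^ 2 / ((1 - γA) * (1 - γB) * (3 - γB) ^ 2)
noncomputable def c₃ : ℝ := γA * (1 + γB) ^ 2 / ((1 - γA) * (1 - γB) * (3 - γB) ^ 2)
noncomputable def c₄ : ℝ := γB / ((1 - γA) * (1 - γB))
noncomputable def t₁ : ℝ := (2 - γB) / 3
noncomputable def t₂ : ℝ := (4 - 3 * γA - 2 * γB + γA * γB) / 6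
noncomputable def t₃ : ℝ := (1 - γB) / 6
noncomputable def t₄ : ℝ := (1 - γA) / 3

noncomputable def η (k : ℕ) : ℝ :=
  if k = 0 then 1 else c₁ * t₁ ^ k + c₂ * t₂ ^ k - c₃ * t₃ ^ k - c₄ * t₄ ^ k

lemma gB_lb : (0.109 : ℝ) < γB := by
  have h0 : Real.sqrt 13 ^ 2 = 13 := Real.sq_sqrt (by norm_num)
  have hn : (0:ℝ) ≤ Real.sqrt 13 := Real.sqrt_nonneg 13
  have h1 : (3.6:ℝ) ≤ Real.sqrt 13 := by nlinarith
  unfold γB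
  rw [lt_div_iff₀ (by norm_num : (0:ℝ) < 108)]
  nlinarith

lemma gB_ub : γB < (0.111 : ℝ) := by
  have h0 : Real.sqrt 13 ^ 2 = 13 := Real.sq_sqrt (by norm_num)
  have hn : (0:ℝ) ≤ Real.sqrt 13 := Real.sqrt_nonneg 13
  have h2 : Real.sqrt 13 ≤ (3.61:ℝ) := by nlinarith
  unfold γB
  rw [div_lt_iff₀ (by norm_num : (0:ℝ) < 108)]
  nlinarith

set_option maxHeartbeats 1000000 in
theorem stmt_10 : StrictAnti η := by
  have h1 := gB_lb
  have h2 := gB_ub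
  have hd : (0:ℝ) < (3 - γB) ^ 2 := by nlinarith
  have hd2 : (0:ℝ) < (1 - γA) * (1 - γB) * (3 - γB) ^ 2 := by
    unfold γA; nlinarith
  have hd3 : (0:ℝ) < (1 - γA) * (1 - γB) := by unfold γA; nlinarith
  -- positivity / range of t's
  have ht1 : (0:ℝ) < t₁ := by unfold t₁; nlinarith
  have ht2 : (0:ℝ) < t₂ := by unfold t₂ γA; nlinarith
  have ht3 : (0:ℝ) ≤ t₃ := by unfold t₃; nlinarith
  have ht4 : (0:ℝ) ≤ t₄ := by unfold t₄ γA; nlinarith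
  have h14 : t₄ ≤ t₁ := by unfold t₁ t₄ γA; nlinarith
  have h23 : t₃ ≤ t₂ := by unfold t₂ t₃ γA; nlinarith
  -- key constant bounds
  have k1 : (0.3:ℝ) < c₁ * (1 - t₁) := by
    unfold c₁ t₁
    rw [div_mul_eq_mul_div, lt_div_iff₀ hd]
    nlinarith
  have k2 : (0.07:ℝ) < c₂ * (1 - t₂) := by
    unfold c₂ t₂
    rw [div_mul_eq_mul_div, lt_div_iff₀ hd2]
    unfold γA; nlinarith
  have k3 : c₃ * (1 - t₃) < (0.01:ℝ) := by
    unfold c₃ t₃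
    rw [div_mul_eq_mul_div, div_lt_iff₀ hd2]
    unfold γA; nlinarith
  have k4 : c₄ * (1 - t₄) < (0.1:ℝ) := by
    unfold c₄ t₄
    rw [div_mul_eq_mul_div, div_lt_iff₀ hd3]
    unfold γA; nlinarith
  have hc3 : (0:ℝ) ≤ c₃ := by
    unfold c₃ γA
    positivity
  have hc4 : (0:ℝ) ≤ c₄ := by
    apply div_nonneg (by nlinarith) (le_of_lt hd3)
  apply strictAnti_nat_of_succ_lt
  intro k
  rcases Nat.eq_zero_or_pos k with hk | hk
  · subst hk
    have e0 : η (0 + 1) = c₁ * t₁ + c₂ * t₂ - c₃ * t₃ - c₄ * t₄ := by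
      norm_num [η]
    have e1 : η 0 = 1 := by norm_num [η]
    rw [e0, e1]
    -- show c₁ t₁ + c₂ t₂ - c₃ t₃ - c₄ t₄ < 1
    have b1 : c₁ * t₁ < 0.62 := by
      unfold c₁ t₁
      rw [div_mul_eq_mul_div, div_lt_iff₀ hd]
      nlinarith
    have b2 : c₂ * t₂ < 0.12 := by
      unfold c₂ t₂
      rw [div_mul_eq_mul_div, div_lt_iff₀ hd2]
      unfold γA; nlinarith
    have b3 : (0:ℝ) ≤ c₃ * t₃ := mul_nonneg hc3 ht3
    have b4 : (0:ℝ) ≤ c₄ * t₄ := mul_nonneg hc4 ht4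
    nlinarith
  · have hk0 : k ≠ 0 := Nat.pos_iff_ne_zero.mp hk
    simp only [η, if_neg (Nat.succ_ne_zero k), if_neg hk0]
    have p1 : (0:ℝ) < t₁ ^ k := pow_pos ht1 k
    have p2 : (0:ℝ) < t₂ ^ k := pow_pos ht2 k
    have p3 : (0:ℝ) ≤ t₃ ^ k := pow_nonneg ht3 k
    have p4 : (0:ℝ) ≤ t₄ ^ k := pow_nonneg ht4 k
    have q14 : t₄ ^ k ≤ t₁ ^ k := pow_le_pow_left₀ ht4 h14 k
    have q23 : t₃ ^ k ≤ t₂ ^ k := pow_le_pow_left₀ ht3 h23 k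
    have key : c₃ * t₃ ^ k * (1 - t₃) + c₄ * t₄ ^ k * (1 - t₄) <
        c₁ * t₁ ^ k * (1 - t₁) + c₂ * t₂ ^ k * (1 - t₂) := by
      have L3 : c₃ * t₃ ^ k * (1 - t₃) ≤ 0.01 * t₂ ^ k := by
        calc c₃ * t₃ ^ k * (1 - t₃) = c₃ * (1 - t₃) * t₃ ^ k := by ring
        _ ≤ 0.01 * t₃ ^ k := by
            apply mul_le_mul_of_nonneg_right (le_of_lt k3) p3
        _ ≤ 0.01 * t₂ ^ k := by linarith
      have L4 : c₄ * t₄ ^ k * (1 - t₄) ≤ 0.1 * t₁ ^ k := by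
        calc c₄ * t₄ ^ k * (1 - t₄) = c₄ * (1 - t₄) * t₄ ^ k := by ring
        _ ≤ 0.1 * t₄ ^ k := by
            apply mul_le_mul_of_nonneg_right (le_of_lt k4) p4
        _ ≤ 0.1 * t₁ ^ k := by linarith
      have R1 : 0.3 * t₁ ^ k < c₁ * t₁ ^ k * (1 - t₁) := by
        have := mul_lt_mul_of_pos_right k1 p1
        nlinarith
      have R2 : 0.07 * t₂ ^ k < c₂ * t₂ ^ k * (1 - t₂) := by
        have := mul_lt_mul_of_pos_right k2 p2
        nlinarith
      nlinarith
    have e1 : t₁ ^ (k + 1) = t₁ ^ k * t₁ := pow_succ t₁ k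
    have e2 : t₂ ^ (k + 1) = t₂ ^ k * t₂ := pow_succ t₂ k
    have e3 : t₃ ^ (k + 1) = t₃ ^ k * t₃ := pow_succ t₃ k
    have e4 : t₄ ^ (k + 1) = t₄ ^ k * t₄ := pow_succ t₄ k
    rw [e1, e2, e3, e4]
    nlinarith [key]
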